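/- Truncated-expectation representation: let L : ℝ → ℝ be Borel measurable with L(X) integrable for X ~ TD(θ), let b ∈ ℝ, and write W_{μ,σ} = σW + μ. If b < μ, then E[𝟙{X ≤ b}·L(X)] = (ρσ/Z_θ)·E[𝟙{W ≤ (b−μ)/σ}·L(W_{μ,σ})] + (δσ/Z_θ)·{ E[𝟙{Y ≤ ((b−μ)/(ασ))², W ≤ (b−μ)/σ}·L(W_{μ,σ})] + E[𝟙{Y ≥ ((b−μ)/(ασ))², W ≤ −α√Y}·L(W_{μ,σ})] }. If b ≥ μ, then E[𝟙{X ≤ b}·L(X)] = (ρσ/Z_θ)·E[𝟙{W ≤ (b−μ)/σ}·L(W_{μ,σ})] + (δσ/Z_θ)·{ E[𝟙{W ≤ −α√Y}·L(W_{μ,σ})] + E[𝟙{Y ≤ ((b−μ)/(ασ))², α√Y ≤ W ≤ (b−μ)/σ}·L(W_{μ,σ})] }. Here E[𝟙{X ≤ b}·L(X)] = ∫_{−∞}^b L(x)·f(x; θ) dx, and the expectations on the right are the corresponding double integrals in (w, y) against the densities g(w) and y^{p−1}e^{−y}/Γ(p). -/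

import Mathlib

open MeasureTheory Real Set Filter

noncomputable def lincGamma (p u : ℝ) : ℝ := ∫ w in (0:ℝ)..u, w ^ (p - 1) * Real.exp (-w)

noncomputable def Tfun (p α x : ℝ) : ℝ := lincGamma p (x ^ 2 / α ^ 2) / Real.Gamma p

noncomputable def gammaPDF (p y : ℝ) : ℝ := y ^ (p - 1) * Real.exp (-y) / Real.Gamma p

noncomputable def Znorm (p σ α ρ δ : ℝ) (g : ℝ → ℝ) : ℝ :=
  σ * ∫ w : ℝ, (ρ + δ * Tfun p α w) * g w

noncomputable def tdPDF (p μ σ α ρ δ : ℝ) (g : ℝ → ℝ) (x : ℝ) : ℝ :=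
  (1 / Znorm p σ α ρ δ g) * (ρ + δ * Tfun p α ((x - μ) / σ)) * g ((x - μ) / σ)

noncomputable def cdfOf (d : ℝ → ℝ) (x : ℝ) : ℝ := ∫ t in Iic x, d t


lemma gammaPDF_meas (p : ℝ) : Measurable (gammaPDF p) := by
  unfold gammaPDF
  fun_prop

lemma gammaPDF_nonneg {p : ℝ} (hp : 0 < p) {y : ℝ} (hy : 0 ≤ y) : 0 ≤ gammaPDF p y := by
  simp only [gammaPDF]
  have := Real.Gamma_pos_of_pos hp
  positivity

lemma gammaPDF_integrableOn {p : ℝ} (hp : 0 < p) : IntegrableOn (gammaPDF p) (Ioi 0) := by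
  have h := Real.GammaIntegral_convergent hp
  have : gammaPDF p = fun y => (Real.exp (-y) * y ^ (p - 1)) * (Real.Gamma p)⁻¹ := by
    funext y; simp only [gammaPDF]; ring
  rw [this]
  exact h.mul_const _

lemma Tfun_eq {p : ℝ} (α w : ℝ) :
    Tfun p α w = ∫ y in Ioc 0 (w ^ 2 / α ^ 2), gammaPDF p y := by
  have h0 : (0:ℝ) ≤ w ^ 2 / α ^ 2 := div_nonneg (sq_nonneg w) (sq_nonneg α)
  simp only [Tfun, lincGamma, gammaPDF]
  rw [intervalIntegral.integral_of_le h0, integral_div]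

lemma Tfun_nonneg {p : ℝ} (hp : 0 < p) (α w : ℝ) : 0 ≤ Tfun p α w := by
  rw [Tfun_eq]
  exact setIntegral_nonneg measurableSet_Ioc fun y hy => gammaPDF_nonneg hp hy.1.le

lemma Tfun_meas {p : ℝ} (hp : 0 < p) (α : ℝ) : Measurable (Tfun p α) := by
  have mono : Monotone fun u => ∫ y in Ioc (0:ℝ) u, gammaPDF p y := by
    intro u v huv
    apply setIntegral_mono_set ((gammaPDF_integrableOn hp).mono_set Ioc_subset_Ioi_self)
    · exact (ae_restrict_iff' measurableSet_Ioc).2 (ae_of_all _ fun y hy => gammaPDF_nonneg hp hy.1.le)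
    · exact HasSubset.Subset.eventuallyLE (Ioc_subset_Ioc_right huv)
  have : Tfun p α = (fun u => ∫ y in Ioc (0:ℝ) u, gammaPDF p y) ∘ (fun w => w ^ 2 / α ^ 2) := by
    funext w; exact Tfun_eq α w
  rw [this]
  exact mono.measurable.comp ((measurable_id.pow_const 2).div_const _)

lemma sq_cond_iff {α : ℝ} (hα : 0 < α) {y : ℝ} (hy : 0 ≤ y) (w : ℝ) :
    y ≤ w ^ 2 / α ^ 2 ↔ α * Real.sqrt y ≤ |w| := by
  have hα2 : (0:ℝ) < α ^ 2 := by positivity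
  have hs : Real.sqrt y ^ 2 = y := Real.sq_sqrt hy
  have hs0 : 0 ≤ Real.sqrt y := Real.sqrt_nonneg y
  rw [le_div_iff₀ hα2]
  constructor
  · intro H
    by_contra hlt
    push_neg at hlt
    have h2 : |w| ^ 2 < (α * Real.sqrt y) ^ 2 :=
      pow_lt_pow_left₀ hlt (abs_nonneg w) two_ne_zero
    rw [mul_pow, hs, sq_abs] at h2
    nlinarith
  · intro H
    have h2 : (α * Real.sqrt y) ^ 2 ≤ |w| ^ 2 := pow_le_pow_left₀ (by positivity) H 2
    rw [mul_pow, hs, sq_abs] at h2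
    nlinarith

lemma sq_cond_iff' {α : ℝ} (hα : 0 < α) {y : ℝ} (hy : 0 ≤ y) (w : ℝ) :
    y ≤ w ^ 2 / α ^ 2 ↔ (w ≤ -α * Real.sqrt y ∨ α * Real.sqrt y ≤ w) := by
  rw [sq_cond_iff hα hy w, le_abs]
  constructor
  · rintro (h | h)
    · right; exact h
    · left; rw [neg_mul]; linarith
  · rintro (h | h)
    · right; rw [neg_mul] at h; linarith
    · left; exact h

lemma piece_eval {p : ℝ} (h : ℝ → ℝ)
    (Y : Set ℝ) (J : ℝ → Set ℝ) (mJ : ∀ y, MeasurableSet (J y))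
    (hAint : Integrable ({z : ℝ × ℝ | z.2 ∈ Y ∧ z.1 ∈ J z.2}.indicator
      (fun z : ℝ × ℝ => h z.1 * gammaPDF p z.2)) (volume.prod volume)) :
    ∫ z, {z : ℝ × ℝ | z.2 ∈ Y ∧ z.1 ∈ J z.2}.indicator
        (fun z : ℝ × ℝ => h z.1 * gammaPDF p z.2) z ∂(volume.prod volume)
      = ∫ y, Y.indicator (fun y => (∫ w in J y, h w) * gammaPDF p y) y := by
  set f : ℝ × ℝ → ℝ := fun z => h z.1 * gammaPDF p z.2 with hf
  set A : Set (ℝ × ℝ) := {z : ℝ × ℝ | z.2 ∈ Y ∧ z.1 ∈ J z.2} with hA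
  rw [integral_prod_symm _ hAint]
  refine integral_congr_ae (ae_of_all _ fun y => ?_)
  by_cases hy : y ∈ Y
  · have e : (fun w => A.indicator f (w, y)) = (J y).indicator fun w => h w * gammaPDF p y := by
      funext w
      by_cases hw : w ∈ J y
      · rw [Set.indicator_of_mem (show (w, y) ∈ A from ⟨hy, hw⟩) f, Set.indicator_of_mem hw]
      · rw [Set.indicator_of_notMem (show (w, y) ∉ A from fun hm => hw hm.2) f,
          Set.indicator_of_notMem hw]
    show (∫ w, A.indicator f (w, y)) = Y.indicator (fun y => (∫ w in J y, h w) * gammaPDF p y) y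
    rw [e, integral_indicator (mJ y), integral_mul_const,
      Set.indicator_of_mem hy (fun y => (∫ w in J y, h w) * gammaPDF p y)]
  · have e : (fun w => A.indicator f (w, y)) = fun _ => (0:ℝ) := by
      funext w
      exact Set.indicator_of_notMem (fun hm => hy hm.1) f
    show (∫ w, A.indicator f (w, y)) = Y.indicator (fun y => (∫ w in J y, h w) * gammaPDF p y) y
    rw [e, integral_zero, Set.indicator_of_notMem hy]

lemma core (p α c : ℝ) (hp : 0 < p) (hα : 0 < α) (h : ℝ → ℝ) (hm : Measurable h)
    (hint : IntegrableOn (fun w => h w * Tfun p α w) (Iic c)) :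
    (c < 0 → ∫ w in Iic c, h w * Tfun p α w
        = (∫ y in Ioc (0:ℝ) (c ^ 2 / α ^ 2), (∫ w in Iic c, h w) * gammaPDF p y)
          + ∫ y in Ioi (c ^ 2 / α ^ 2), (∫ w in Iic (-α * Real.sqrt y), h w) * gammaPDF p y)
    ∧ (0 ≤ c → ∫ w in Iic c, h w * Tfun p α w
        = (∫ y in Ioi (0:ℝ), (∫ w in Iic (-α * Real.sqrt y), h w) * gammaPDF p y)
          + ∫ y in Ioc (0:ℝ) (c ^ 2 / α ^ 2), (∫ w in Icc (α * Real.sqrt y) c, h w) * gammaPDF p y) := by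
  have hα2 : (0:ℝ) < α ^ 2 := by positivity
  have ht0 : (0:ℝ) ≤ c ^ 2 / α ^ 2 := div_nonneg (sq_nonneg c) (sq_nonneg α)
  set t := c ^ 2 / α ^ 2 with htdef
  set f : ℝ × ℝ → ℝ := fun z => h z.1 * gammaPDF p z.2 with hf
  have mf : Measurable f := (hm.comp measurable_fst).mul ((gammaPDF_meas p).comp measurable_snd)
  set S : Set (ℝ × ℝ) := {z | z.1 ≤ c ∧ 0 < z.2 ∧ z.2 ≤ z.1 ^ 2 / α ^ 2} with hS
  have mS : MeasurableSet S := by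
    have h1 : MeasurableSet {z : ℝ × ℝ | z.1 ≤ c} := measurableSet_le measurable_fst measurable_const
    have h2 : MeasurableSet {z : ℝ × ℝ | 0 < z.2} := measurableSet_lt measurable_const measurable_snd
    have h3 : MeasurableSet {z : ℝ × ℝ | z.2 ≤ z.1 ^ 2 / α ^ 2} :=
      measurableSet_le measurable_snd ((measurable_fst.pow_const 2).div_const _)
    exact h1.inter (h2.inter h3)
  have gInt : ∀ u : ℝ, IntegrableOn (gammaPDF p) (Ioc 0 u) := fun u =>
    (gammaPDF_integrableOn hp).mono_set Ioc_subset_Ioi_self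
  -- sections of the indicator of S
  have secΦ : ∀ w : ℝ, w ≤ c → (fun y => S.indicator f (w, y))
      = (Ioc 0 (w ^ 2 / α ^ 2)).indicator fun y => h w * gammaPDF p y := by
    intro w hw
    funext y
    by_cases hy : y ∈ Ioc 0 (w ^ 2 / α ^ 2)
    · rw [Set.indicator_of_mem (show (w, y) ∈ S from ⟨hw, hy.1, hy.2⟩) f,
        Set.indicator_of_mem hy]
    · rw [Set.indicator_of_notMem (show (w, y) ∉ S from fun hmem => hy ⟨hmem.2.1, hmem.2.2⟩) f,
        Set.indicator_of_notMem hy]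
  have secΦ' : ∀ w : ℝ, ¬ w ≤ c → (fun y => S.indicator f (w, y)) = fun _ => (0:ℝ) := by
    intro w hw
    funext y
    exact Set.indicator_of_notMem (fun hmem => hw hmem.1) f
  have sectInt : ∀ w : ℝ, Integrable (fun y => S.indicator f (w, y)) := by
    intro w
    by_cases hw : w ≤ c
    · rw [secΦ w hw]
      exact IntegrableOn.integrable_indicator ((gInt _).const_mul _) measurableSet_Ioc
    · rw [secΦ' w hw]
      exact integrable_zero _ _ _
  have secVal : ∀ w : ℝ, (∫ y, S.indicator f (w, y))
      = (Iic c).indicator (fun w => h w * Tfun p α w) w := by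
    intro w
    by_cases hw : w ≤ c
    · rw [secΦ w hw, integral_indicator measurableSet_Ioc, integral_const_mul,
        ← Tfun_eq α w, Set.indicator_of_mem (show w ∈ Iic c from hw)]
    · rw [secΦ' w hw, integral_zero, Set.indicator_of_notMem (show w ∉ Iic c from hw)]
  have secNorm : ∀ w : ℝ, (∫ y, ‖S.indicator f (w, y)‖)
      = (Iic c).indicator (fun w => ‖h w‖ * Tfun p α w) w := by
    intro w
    by_cases hw : w ≤ c
    · have e : (fun y => ‖S.indicator f (w, y)‖)
          = (Ioc 0 (w ^ 2 / α ^ 2)).indicator fun y => ‖h w‖ * gammaPDF p y := by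
        funext y
        rw [show S.indicator f (w, y)
            = (Ioc 0 (w ^ 2 / α ^ 2)).indicator (fun y => h w * gammaPDF p y) y from
          congrFun (secΦ w hw) y, norm_indicator_eq_indicator_norm]
        refine congrFun (Set.indicator_congr fun y hy => ?_) y
        rw [norm_mul, Real.norm_of_nonneg (gammaPDF_nonneg hp hy.1.le)]
      rw [e, integral_indicator measurableSet_Ioc, integral_const_mul, ← Tfun_eq α w,
        Set.indicator_of_mem (show w ∈ Iic c from hw)]
    · have e : (fun y => ‖S.indicator f (w, y)‖) = fun _ => (0:ℝ) := by
        funext y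
        rw [show S.indicator f (w, y) = (0:ℝ) from congrFun (secΦ' w hw) y, norm_zero]
      rw [e, integral_zero, Set.indicator_of_notMem (show w ∉ Iic c from hw)]
  have intΦ : Integrable (S.indicator f) (volume.prod volume) := by
    rw [integrable_prod_iff (mf.indicator mS).aestronglyMeasurable]
    refine ⟨ae_of_all _ sectInt, ?_⟩
    rw [show (fun w => ∫ y, ‖S.indicator f (w, y)‖)
        = (Iic c).indicator fun w => ‖h w‖ * Tfun p α w from funext secNorm]
    refine IntegrableOn.integrable_indicator ?_ measurableSet_Iic
    exact hint.norm.congr (ae_of_all _ fun w => by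
      show ‖h w * Tfun p α w‖ = ‖h w‖ * Tfun p α w
      rw [norm_mul, Real.norm_of_nonneg (Tfun_nonneg hp α w)])
  have base : ∫ w in Iic c, h w * Tfun p α w = ∫ z, S.indicator f z ∂(volume.prod volume) := by
    rw [← integral_indicator measurableSet_Iic, integral_prod _ intΦ]
    exact integral_congr_ae (ae_of_all _ fun w => (secVal w).symm)
  have hsub : ∀ {A : Set (ℝ × ℝ)}, A ⊆ S → MeasurableSet A →
      Integrable (A.indicator f) (volume.prod volume) := by
    intro A hA mA
    refine intΦ.norm.mono' (mf.indicator mA).aestronglyMeasurable (ae_of_all _ fun z => ?_)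
    by_cases hz : z ∈ A
    · rw [Set.indicator_of_mem hz, Set.indicator_of_mem (hA hz)]
    · rw [Set.indicator_of_notMem hz, norm_zero]
      exact norm_nonneg _
  constructor
  · -- case c < 0
    intro hc
    set A₁ : Set (ℝ × ℝ) := {z | z.2 ∈ Ioc (0:ℝ) t ∧ z.1 ∈ Iic c} with hA₁
    set A₂ : Set (ℝ × ℝ) := {z | z.2 ∈ Ioi t ∧ z.1 ∈ Iic (-α * Real.sqrt z.2)} with hA₂
    have mA₁ : MeasurableSet A₁ := by
      have h1 : MeasurableSet {z : ℝ × ℝ | z.2 ∈ Ioc (0:ℝ) t} :=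
        measurable_snd measurableSet_Ioc
      have h2 : MeasurableSet {z : ℝ × ℝ | z.1 ∈ Iic c} :=
        measurable_fst measurableSet_Iic
      exact h1.inter h2
    have mA₂ : MeasurableSet A₂ := by
      have h1 : MeasurableSet {z : ℝ × ℝ | z.2 ∈ Ioi t} := measurable_snd measurableSet_Ioi
      have h2 : MeasurableSet {z : ℝ × ℝ | z.1 ∈ Iic (-α * Real.sqrt z.2)} :=
        measurableSet_le measurable_fst
          ((Real.continuous_sqrt.measurable.comp measurable_snd).const_mul (-α))
      exact h1.inter h2
    have hSU : S = A₁ ∪ A₂ := by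
      ext ⟨w, y⟩
      simp only [hS, hA₁, hA₂, mem_setOf_eq, mem_union, mem_Ioc, mem_Ioi, mem_Iic]
      constructor
      · rintro ⟨hw, hy0, hyw⟩
        by_cases hyt : y ≤ t
        · exact Or.inl ⟨⟨hy0, hyt⟩, hw⟩
        · push_neg at hyt
          refine Or.inr ⟨hyt, ?_⟩
          rcases (sq_cond_iff' hα hy0.le w).1 hyw with hcase | hcase
          · exact hcase
          · exfalso
            have := Real.sqrt_nonneg y
            nlinarith
      · rintro (⟨⟨hy0, hyt⟩, hw⟩ | ⟨hyt, hw⟩)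
        · refine ⟨hw, hy0, ?_⟩
          have h1 : c ^ 2 / α ^ 2 ≤ w ^ 2 / α ^ 2 :=
            (div_le_div_iff_of_pos_right hα2).2 (by nlinarith)
          calc y ≤ t := hyt
            _ ≤ w ^ 2 / α ^ 2 := h1
        · have hy0 : 0 < y := lt_of_le_of_lt ht0 hyt
          refine ⟨?_, hy0, (sq_cond_iff' hα hy0.le w).2 (Or.inl hw)⟩
          by_contra hcw
          push_neg at hcw
          have h2 : α * Real.sqrt y ≤ -c := by rw [neg_mul] at hw; linarith
          have h3 : y ≤ c ^ 2 / α ^ 2 := (sq_cond_iff hα hy0.le c).2 (by rwa [abs_of_neg hc])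
          rw [← htdef] at h3
          linarith
    have hdisj : Disjoint A₁ A₂ := by
      rw [Set.disjoint_left]
      rintro ⟨w, y⟩ h1 h2
      exact absurd h1.1.2 (not_le.2 h2.1)
    have s1 : A₁ ⊆ S := by rw [hSU]; exact subset_union_left
    have s2 : A₂ ⊆ S := by rw [hSU]; exact subset_union_right
    have int₁ := hsub s1 mA₁
    have int₂ := hsub s2 mA₂
    have e1 := piece_eval h (Ioc (0:ℝ) t) (fun _ => Iic c) (fun _ => measurableSet_Iic) int₁
    have e2 := piece_eval h (Ioi t) (fun y => Iic (-α * Real.sqrt y))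
      (fun _ => measurableSet_Iic) int₂
    rw [base, hSU, Set.indicator_union_of_disjoint hdisj f, integral_add int₁ int₂,
      e1, e2, integral_indicator measurableSet_Ioc, integral_indicator measurableSet_Ioi]
  · -- case 0 ≤ c
    intro hc
    set A₁ : Set (ℝ × ℝ) := {z | z.2 ∈ Ioi (0:ℝ) ∧ z.1 ∈ Iic (-α * Real.sqrt z.2)} with hA₁
    set A₂ : Set (ℝ × ℝ) := {z | z.2 ∈ Ioc (0:ℝ) t ∧ z.1 ∈ Icc (α * Real.sqrt z.2) c} with hA₂
    have mA₁ : MeasurableSet A₁ := by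
      have h1 : MeasurableSet {z : ℝ × ℝ | z.2 ∈ Ioi (0:ℝ)} := measurable_snd measurableSet_Ioi
      have h2 : MeasurableSet {z : ℝ × ℝ | z.1 ∈ Iic (-α * Real.sqrt z.2)} :=
        measurableSet_le measurable_fst
          ((Real.continuous_sqrt.measurable.comp measurable_snd).const_mul (-α))
      exact h1.inter h2
    have mA₂ : MeasurableSet A₂ := by
      have h1 : MeasurableSet {z : ℝ × ℝ | z.2 ∈ Ioc (0:ℝ) t} :=
        measurable_snd measurableSet_Ioc
      have h2 : MeasurableSet {z : ℝ × ℝ | α * Real.sqrt z.2 ≤ z.1} :=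
        measurableSet_le ((Real.continuous_sqrt.measurable.comp measurable_snd).const_mul α)
          measurable_fst
      have h3 : MeasurableSet {z : ℝ × ℝ | z.1 ≤ c} :=
        measurableSet_le measurable_fst measurable_const
      exact h1.inter (h2.inter h3)
    have hSU : S = A₁ ∪ A₂ := by
      ext ⟨w, y⟩
      simp only [hS, hA₁, hA₂, mem_setOf_eq, mem_union, mem_Ioc, mem_Ioi, mem_Iic, mem_Icc]
      constructor
      · rintro ⟨hw, hy0, hyw⟩
        rcases (sq_cond_iff' hα hy0.le w).1 hyw with hcase | hcase
        · exact Or.inl ⟨hy0, hcase⟩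
        · refine Or.inr ⟨⟨hy0, ?_⟩, hcase, hw⟩
          have : α * Real.sqrt y ≤ |c| := by rw [abs_of_nonneg hc]; linarith
          exact (sq_cond_iff hα hy0.le c).2 this
      · rintro (⟨hy0, hw⟩ | ⟨⟨hy0, hyt⟩, hw1, hw2⟩)
        · have hs0 : 0 ≤ Real.sqrt y := Real.sqrt_nonneg y
          refine ⟨by nlinarith, hy0, (sq_cond_iff' hα hy0.le w).2 (Or.inl hw)⟩
        · exact ⟨hw2, hy0, (sq_cond_iff' hα hy0.le w).2 (Or.inr hw1)⟩
    have hdisj : Disjoint A₁ A₂ := by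
      rw [Set.disjoint_left]
      rintro ⟨w, y⟩ h1 h2
      have hy0 : 0 < Real.sqrt y := Real.sqrt_pos.2 h1.1
      have ha := h1.2
      have hb := h2.2.1
      rw [neg_mul] at ha
      simp only [mem_Iic] at ha
      nlinarith
    have s1 : A₁ ⊆ S := by rw [hSU]; exact subset_union_left
    have s2 : A₂ ⊆ S := by rw [hSU]; exact subset_union_right
    have int₁ := hsub s1 mA₁
    have int₂ := hsub s2 mA₂
    have e1 := piece_eval h (Ioi (0:ℝ)) (fun y => Iic (-α * Real.sqrt y))
      (fun _ => measurableSet_Iic) int₁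
    have e2 := piece_eval h (Ioc (0:ℝ) t) (fun y => Icc (α * Real.sqrt y) c)
      (fun _ => measurableSet_Icc) int₂
    rw [base, hSU, Set.indicator_union_of_disjoint hdisj f, integral_add int₁ int₂,
      e1, e2, integral_indicator measurableSet_Ioi, integral_indicator measurableSet_Ioc]

lemma dom1 {ρ δ T H : ℝ} (hρ : 0 ≤ ρ) (hδ : 0 ≤ δ) (hT : 0 ≤ T) :
    ‖ρ * H‖ ≤ ‖H * (ρ + δ * T)‖ := by
  rw [norm_mul, norm_mul, Real.norm_of_nonneg hρ,
    Real.norm_of_nonneg (add_nonneg hρ (mul_nonneg hδ hT))]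
  nlinarith [norm_nonneg H, mul_nonneg hδ hT]

lemma dom2 {ρ δ T H : ℝ} (hρ : 0 ≤ ρ) (hδ : 0 ≤ δ) (hT : 0 ≤ T) :
    ‖δ * (H * T)‖ ≤ ‖H * (ρ + δ * T)‖ := by
  rw [norm_mul, norm_mul, norm_mul, Real.norm_of_nonneg hδ, Real.norm_of_nonneg hT,
    Real.norm_of_nonneg (add_nonneg hρ (mul_nonneg hδ hT))]
  nlinarith [norm_nonneg H, mul_nonneg hρ (norm_nonneg H)]

/-- truncated-expectation representation of `E[𝟙{X ≤ b} L(X)]`. -/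
theorem stmt6 (p μ σ α ρ δ : ℝ) (hp : 0 < p) (hσ : 0 < σ) (hα : 0 < α)
    (hρ : 0 ≤ ρ) (hδ : 0 ≤ δ) (hρδ : 0 < ρ + δ)
    (g : ℝ → ℝ) (hg0 : ∀ x, 0 ≤ g x) (hgm : Measurable g)
    (hgi : Integrable g) (hg1 : (∫ x : ℝ, g x) = 1)
    (L : ℝ → ℝ) (hLm : Measurable L)
    (hLint : Integrable (fun x => L x * tdPDF p μ σ α ρ δ g x))
    (b : ℝ) :
    (b < μ →
      (∫ x in Iic b, L x * tdPDF p μ σ α ρ δ g x)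
        = (ρ * σ / Znorm p σ α ρ δ g)
            * (∫ w in Iic ((b - μ) / σ), L (σ * w + μ) * g w)
          + (δ * σ / Znorm p σ α ρ δ g) *
              ((∫ y in (0:ℝ)..(((b - μ) / (α * σ)) ^ 2),
                  (∫ w in Iic ((b - μ) / σ), L (σ * w + μ) * g w) * gammaPDF p y)
                + (∫ y in Ici (((b - μ) / (α * σ)) ^ 2),
                    (∫ w in Iic (-α * Real.sqrt y), L (σ * w + μ) * g w) * gammaPDF p y)))
    ∧ (μ ≤ b →
      (∫ x in Iic b, L x * tdPDF p μ σ α ρ δ g x)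
        = (ρ * σ / Znorm p σ α ρ δ g)
            * (∫ w in Iic ((b - μ) / σ), L (σ * w + μ) * g w)
          + (δ * σ / Znorm p σ α ρ δ g) *
              ((∫ y in Ioi (0:ℝ),
                  (∫ w in Iic (-α * Real.sqrt y), L (σ * w + μ) * g w) * gammaPDF p y)
                + (∫ y in (0:ℝ)..(((b - μ) / (α * σ)) ^ 2),
                    (∫ w in Icc (α * Real.sqrt y) ((b - μ) / σ),
                      L (σ * w + μ) * g w) * gammaPDF p y))) := by
  have hT0 := Tfun_nonneg hp α
  have hTm := Tfun_meas hp α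
  set Z := Znorm p σ α ρ δ g with hZdef
  set c := (b - μ) / σ with hc
  set h : ℝ → ℝ := fun w => L (σ * w + μ) * g w with hh
  have hm : Measurable h := (hLm.comp ((measurable_id.const_mul σ).add_const μ)).mul hgm
  by_cases hZ0 : Z = 0
  · have hpdf : ∀ x, L x * tdPDF p μ σ α ρ δ g x = 0 := by
      intro x
      unfold tdPDF
      rw [← hZdef, hZ0]
      simp
    have hL0 : (∫ x in Iic b, L x * tdPDF p μ σ α ρ δ g x) = 0 := by
      simp only [hpdf, integral_zero]
    constructor <;> intro _ <;> rw [hL0, hZ0] <;> simp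
  · set F : ℝ → ℝ := fun x =>
      L x * ((ρ + δ * Tfun p α ((x - μ) / σ)) * g ((x - μ) / σ)) with hF
    have hFeq : ∀ x, L x * tdPDF p μ σ α ρ δ g x = Z⁻¹ * F x := by
      intro x
      have h1 : tdPDF p μ σ α ρ δ g x
          = (1 / Z) * (ρ + δ * Tfun p α ((x - μ) / σ)) * g ((x - μ) / σ) := rfl
      have h2 : F x = L x * ((ρ + δ * Tfun p α ((x - μ) / σ)) * g ((x - μ) / σ)) := rfl
      rw [h1, h2]
      ring
    have hFint : Integrable F := by
      have e : F = fun x => Z * (L x * tdPDF p μ σ α ρ δ g x) := by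
        funext x
        rw [hFeq x, ← mul_assoc, mul_inv_cancel₀ hZ0, one_mul]
      rw [e]
      exact hLint.const_mul Z
    have key2 : Integrable fun w => F (σ * w + μ) := by
      have h1 : Integrable fun x => F (x + μ) := hFint.comp_add_right μ
      exact h1.comp_mul_left' hσ.ne'
    have haff : ∀ w : ℝ, F (σ * w + μ) = h w * (ρ + δ * Tfun p α w) := by
      intro w
      have harg : (σ * w + μ - μ) / σ = w := by field_simp; ring
      have h2 : F (σ * w + μ) = L (σ * w + μ) *
          ((ρ + δ * Tfun p α ((σ * w + μ - μ) / σ)) * g ((σ * w + μ - μ) / σ)) := rfl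
      rw [h2, harg]
      show _ = (L (σ * w + μ) * g w) * (ρ + δ * Tfun p α w)
      ring
    have I₁ : IntegrableOn (fun w => h w * (ρ + δ * Tfun p α w)) (Iic c) :=
      (key2.congr (ae_of_all _ haff)).integrableOn
    have stepA : (∫ x in Iic b, F x) = σ * ∫ w in Iic c, h w * (ρ + δ * Tfun p α w) := by
      have hiff : ∀ w : ℝ, σ * w + μ ≤ b ↔ w ≤ c := by
        intro w
        rw [hc, le_div_iff₀ hσ]
        constructor <;> intro <;> nlinarith
      have hind : ∀ w : ℝ, (Iic b).indicator F (σ * w + μ)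
          = (Iic c).indicator (fun w => h w * (ρ + δ * Tfun p α w)) w := by
        intro w
        by_cases hw : w ≤ c
        · rw [Set.indicator_of_mem (show σ * w + μ ∈ Iic b from (hiff w).2 hw) F,
            Set.indicator_of_mem (show w ∈ Iic c from hw), haff w]
        · rw [Set.indicator_of_notMem
            (show σ * w + μ ∉ Iic b from fun hx => hw ((hiff w).1 hx)) F,
            Set.indicator_of_notMem (show w ∉ Iic c from hw)]
      rw [← integral_indicator measurableSet_Iic, ← integral_indicator measurableSet_Iic]
      have hcv : (∫ x, (Iic b).indicator F x) = σ * ∫ w, (Iic b).indicator F (σ * w + μ) := by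
        have h1 : (∫ w : ℝ, (Iic b).indicator F (σ * w + μ))
            = |σ⁻¹| • ∫ x, (Iic b).indicator F (x + μ) :=
          Measure.integral_comp_mul_left (fun x => (Iic b).indicator F (x + μ)) σ
        rw [h1, integral_add_right_eq_self ((Iic b).indicator F) μ, abs_of_pos (inv_pos.2 hσ),
          smul_eq_mul, ← mul_assoc, mul_inv_cancel₀ hσ.ne', one_mul]
      rw [hcv]
      congr 1
      exact integral_congr_ae (ae_of_all _ hind)
    have Iρ : IntegrableOn (fun w => ρ * h w) (Iic c) := by
      refine Integrable.mono I₁ ((hm.const_mul ρ).aestronglyMeasurable) (ae_of_all _ fun w => ?_)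
      exact dom1 hρ hδ (hT0 w)
    have Iδ : IntegrableOn (fun w => δ * (h w * Tfun p α w)) (Iic c) := by
      refine Integrable.mono I₁ ((hm.mul (hTm)).const_mul δ).aestronglyMeasurable
        (ae_of_all _ fun w => ?_)
      exact dom2 hρ hδ (hT0 w)
    have split2 : (∫ w in Iic c, h w * (ρ + δ * Tfun p α w))
        = ρ * (∫ w in Iic c, h w) + δ * ∫ w in Iic c, h w * Tfun p α w := by
      have e1 : (∫ w in Iic c, h w * (ρ + δ * Tfun p α w))
          = ∫ w in Iic c, (ρ * h w + δ * (h w * Tfun p α w)) :=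
        integral_congr_ae (ae_of_all _ fun w => by ring)
      rw [e1, integral_add Iρ Iδ, integral_const_mul, integral_const_mul]
    have main : (∫ x in Iic b, L x * tdPDF p μ σ α ρ δ g x)
        = Z⁻¹ * (σ * (ρ * (∫ w in Iic c, h w) + δ * ∫ w in Iic c, h w * Tfun p α w)) := by
      rw [show (∫ x in Iic b, L x * tdPDF p μ σ α ρ δ g x) = ∫ x in Iic b, Z⁻¹ * F x from
        integral_congr_ae (ae_of_all _ fun x => hFeq x), integral_const_mul, stepA, split2]
    have hIδT : δ ≠ 0 → IntegrableOn (fun w => h w * Tfun p α w) (Iic c) := by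
      intro hδ0
      refine (Iδ.const_mul δ⁻¹).congr (ae_of_all _ fun w => ?_)
      show δ⁻¹ * (δ * (h w * Tfun p α w)) = h w * Tfun p α w
      rw [← mul_assoc, inv_mul_cancel₀ hδ0, one_mul]
    have htt : ((b - μ) / (α * σ)) ^ 2 = c ^ 2 / α ^ 2 := by
      rw [hc, div_pow, div_pow, mul_pow, div_div, mul_comm (σ ^ 2) (α ^ 2)]
    refine ⟨fun hb => ?_, fun hb => ?_⟩
    · have hcneg : c < 0 := div_neg_of_neg_of_pos (by linarith) hσ
      have hDD : δ * (∫ w in Iic c, h w * Tfun p α w)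
          = δ * ((∫ y in Ioc (0:ℝ) (c ^ 2 / α ^ 2), (∫ w in Iic c, h w) * gammaPDF p y)
              + ∫ y in Ioi (c ^ 2 / α ^ 2),
                  (∫ w in Iic (-α * Real.sqrt y), h w) * gammaPDF p y) := by
        by_cases hδ0 : δ = 0
        · rw [hδ0]; ring
        · congr 1
          exact (core p α c hp hα h hm (hIδT hδ0)).1 hcneg
      rw [main, intervalIntegral.integral_of_le (sq_nonneg ((b - μ) / (α * σ))), htt,
        integral_Ici_eq_integral_Ioi]
      linear_combination (Z⁻¹ * σ) * hDD
    · have hc0 : 0 ≤ c := div_nonneg (by linarith) hσ.le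
      have hDD : δ * (∫ w in Iic c, h w * Tfun p α w)
          = δ * ((∫ y in Ioi (0:ℝ), (∫ w in Iic (-α * Real.sqrt y), h w) * gammaPDF p y)
              + ∫ y in Ioc (0:ℝ) (c ^ 2 / α ^ 2),
                  (∫ w in Icc (α * Real.sqrt y) c, h w) * gammaPDF p y) := by
        by_cases hδ0 : δ = 0
        · rw [hδ0]; ring
        · congr 1
          exact (core p α c hp hα h hm (hIδT hδ0)).2 hc0
      rw [main, intervalIntegral.integral_of_le (sq_nonneg ((b - μ) / (α * σ))), htt]
      linear_combination (Z⁻¹ * σ) * hDD
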